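/- Let G=(V,E) be a directed unweighted graph with a total ranking r, and run the hop-doubling labeling algorithm (initialized with one label entry per edge, iterating the generation rules). Then for all i ≥ 0, after the 2i-th iteration, for each positive integer k ≤ 2^i, every trough shortest path of hop length k is covered by a generated label entry: i.e., for every trough shortest path p from u to v of hop length k with r(u)<r(v), the entry (u→v, ℓ(p)) has been generated. -/

import Mathlib

def IsPath {V : Type*} (E : V → V → Prop) (p : List V) (u v : V) : Prop :=
  List.Chain' E p ∧ p.head? = some u ∧ p.getLast? = some v

def IsShortestPath {V : Type*} (E : V → V → Prop) (p : List V) (u v : V) : Prop :=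
  IsPath E p u v ∧ ∀ q : List V, IsPath E q u v → p.length ≤ q.length

def Trough {V : Type*} (r : V → ℕ) (p : List V) (u v : V) : Prop :=
  ∀ x ∈ (p.drop 1).dropLast, r x < max (r u) (r v)

noncomputable def GDist {V : Type*} (E : V → V → Prop) (u v : V) : ℕ∞ :=
  sInf { n : ℕ∞ | ∃ p : List V, IsPath E p u v ∧ n = ((p.length - 1 : ℕ) : ℕ∞) }

/-- `HDCov E r k u v d` : by the end of iteration `k` of hop-doubling, a label entry
(u → v, d) has been generated. Iteration 0 is the initialization with the edges; at each
subsequent iteration, entries available at the previous iteration are combined by the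
six generation rules. -/
inductive HDCov {V : Type*} (E : V → V → Prop) (r : V → ℕ) : ℕ → V → V → ℕ → Prop
  | edge {u v : V} : E u v → HDCov E r 0 u v 1
  | mono {k : ℕ} {u v : V} {d : ℕ} : HDCov E r k u v d → HDCov E r (k + 1) u v d
  | rule1 {k : ℕ} {u v u1 : V} {d d1 : ℕ} : HDCov E r k u v d → r u < r v →
      HDCov E r k u1 u d1 → r u < r u1 → HDCov E r (k + 1) u1 v (d1 + d)
  | rule2 {k : ℕ} {u v u2 : V} {d d2 : ℕ} : HDCov E r k u v d → r u < r v →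
      HDCov E r k u2 u d2 → r u2 < r u → HDCov E r (k + 1) u2 v (d2 + d)
  | rule3 {k : ℕ} {u v u3 : V} {d d3 : ℕ} : HDCov E r k u v d → r u < r v →
      HDCov E r k v u3 d3 → r v < r u3 → HDCov E r (k + 1) u u3 (d3 + d)
  | rule4 {k : ℕ} {u v u4 : V} {d d4 : ℕ} : HDCov E r k u v d → r v < r u →
      HDCov E r k v u4 d4 → r v < r u4 → HDCov E r (k + 1) u u4 (d4 + d)
  | rule5 {k : ℕ} {u v u5 : V} {d d5 : ℕ} : HDCov E r k u v d → r v < r u →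
      HDCov E r k v u5 d5 → r u5 < r v → HDCov E r (k + 1) u u5 (d5 + d)
  | rule6 {k : ℕ} {u v u6 : V} {d d6 : ℕ} : HDCov E r k u v d → r v < r u →
      HDCov E r k u6 u d6 → r u < r u6 → HDCov E r (k + 1) u6 v (d6 + d)

/-- After the 2i-th iteration of hop-doubling, every trough shortest path of hop length
`k ≤ 2^i` is covered by a generated label entry. -/
def FPath {V : Type*} (E : V → V → Prop) (f : ℕ → V) (k : ℕ) (u v : V) : Prop :=
  f 0 = u ∧ f k = v ∧ ∀ i < k, E (f i) (f (i + 1))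

def MinFP {V : Type*} (E : V → V → Prop) (f : ℕ → V) (k : ℕ) (u v : V) : Prop :=
  FPath E f k u v ∧ ∀ (g : ℕ → V) (k' : ℕ), FPath E g k' u v → k ≤ k'

lemma fpath_glue {V : Type*} {E : V → V → Prop} {g1 g2 : ℕ → V} {k1 k2 : ℕ} {u w v : V}
    (h1 : FPath E g1 k1 u w) (h2 : FPath E g2 k2 w v) :
    FPath E (fun i => if i < k1 then g1 i else g2 (i - k1)) (k1 + k2) u v := by
  obtain ⟨ha1, hb1, hc1⟩ := h1
  obtain ⟨ha2, hb2, hc2⟩ := h2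
  refine ⟨?_, ?_, ?_⟩
  · by_cases h : 0 < k1
    · simpa [h] using ha1
    · have hk : k1 = 0 := by omega
      subst hk
      simpa using ha2.trans (hb1 ▸ ha1)
  · have : ¬ (k1 + k2 < k1) := by omega
    simpa [this] using hb2
  · intro i hi
    rcases lt_trichotomy (i + 1) k1 with h | h | h
    · have : i < k1 := by omega
      simpa [this, h] using hc1 i (by omega)
    · have hi1 : i < k1 := by omega
      have : ¬ (i + 1 < k1) := by omega
      simp only [hi1, if_pos, this, if_neg, if_false]
      have : g2 (i + 1 - k1) = g1 (i + 1) := by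
        have : i + 1 - k1 = 0 := by omega
        rw [this, ha2, ← hb1, h]
      rw [this]
      exact hc1 i (by omega)
    · have h1' : ¬ (i < k1) := by omega
      have h2' : ¬ (i + 1 < k1) := by omega
      simp only [h1', h2', if_neg, if_false]
      have : i + 1 - k1 = (i - k1) + 1 := by omega
      rw [this]
      exact hc2 (i - k1) (by omega)

lemma fpath_seg {V : Type*} {E : V → V → Prop} {f : ℕ → V} {k : ℕ} {u v : V}
    (h : FPath E f k u v) {a c : ℕ} (hac : a ≤ c) (hck : c ≤ k) :
    FPath E (fun i => f (a + i)) (c - a) (f a) (f c) := by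
  obtain ⟨_, _, hc⟩ := h
  refine ⟨by simp, by simp [Nat.add_sub_cancel' hac], fun i hi => hc (a + i) (by omega)⟩

lemma minfp_seg {V : Type*} {E : V → V → Prop} {f : ℕ → V} {k : ℕ} {u v : V}
    (h : MinFP E f k u v) {a c : ℕ} (hac : a ≤ c) (hck : c ≤ k) :
    MinFP E (fun i => f (a + i)) (c - a) (f a) (f c) := by
  refine ⟨fpath_seg h.1 hac hck, fun g k' hg => ?_⟩
  have p1 : FPath E (fun i => f (0 + i)) (a - 0) (f 0) (f a) := fpath_seg h.1 (by omega) (by omega)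
  have p3 : FPath E (fun i => f (c + i)) (k - c) (f c) (f k) := fpath_seg h.1 hck le_rfl
  rw [h.1.1] at p1
  rw [h.1.2.1] at p3
  have big := fpath_glue (fpath_glue p1 hg) p3
  have := h.2 _ _ big
  omega

lemma minfp_inj {V : Type*} {E : V → V → Prop} {f : ℕ → V} {k : ℕ} {u v : V}
    (h : MinFP E f k u v) {i j : ℕ} (hi : i ≤ k) (hj : j ≤ k) (hf : f i = f j) : i = j := by
  rcases le_or_gt i j with hij | hij
  · have := (minfp_seg h hij hj).2 (fun _ => f i) 0 ⟨by simp, by simp [hf], by omega⟩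
    omega
  · have := (minfp_seg h hij.le hi).2 (fun _ => f j) 0 ⟨by simp, by simp [hf], by omega⟩
    omega

lemma list_to_fpath {V : Type*} {E : V → V → Prop} {p : List V} {u v : V}
    (h : IsPath E p u v) : FPath E (fun i => p.getD i u) (p.length - 1) u v := by
  obtain ⟨hc, hh, hl⟩ := h
  have hne : p ≠ [] := by rintro rfl; simp at hh
  have hlen : 0 < p.length := List.length_pos_iff.mpr hne
  have h0 : p[0] = u := by
    rw [List.head?_eq_getElem?, List.getElem?_eq_getElem hlen] at hh
    exact Option.some_injective _ hh
  have hlast : p[p.length - 1] = v := by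
    rw [List.getLast?_eq_getElem?, List.getElem?_eq_getElem (by omega)] at hl
    exact Option.some_injective _ hl
  refine ⟨by show p.getD 0 u = u; rw [List.getD_eq_getElem _ _ hlen]; exact h0,
          by show p.getD (p.length - 1) u = v
             rw [List.getD_eq_getElem _ _ (by omega)]; exact hlast, fun i hi => ?_⟩
  show E (p.getD i u) (p.getD (i + 1) u)
  rw [List.getD_eq_getElem _ _ (by omega), List.getD_eq_getElem _ _ (by omega)]
  have := List.isChain_iff_getElem.mp hc i (by omega)
  simpa using this

lemma fpath_to_list {V : Type*} {E : V → V → Prop} {g : ℕ → V} {k : ℕ} {u v : V}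
    (h : FPath E g k u v) : IsPath E ((List.range (k + 1)).map g) u v := by
  obtain ⟨h0, hk, he⟩ := h
  have hlen : ((List.range (k + 1)).map g).length = k + 1 := by simp
  refine ⟨?_, ?_, ?_⟩
  · apply List.isChain_iff_getElem.mpr
    intro i hi
    simp only [hlen] at hi
    simp only [List.get_eq_getElem, List.getElem_map, List.getElem_range]
    exact he i (by omega)
  · rw [List.head?_eq_getElem?, List.getElem?_eq_getElem (by omega)]
    simp [h0]
  · rw [List.getLast?_eq_getElem?, List.getElem?_eq_getElem (by omega)]
    simp [hlen, hk]

lemma shortest_to_minfp {V : Type*} {E : V → V → Prop} {p : List V} {u v : V}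
    (h : IsShortestPath E p u v) : MinFP E (fun i => p.getD i u) (p.length - 1) u v := by
  refine ⟨list_to_fpath h.1, fun g k' hg => ?_⟩
  have := h.2 _ (fpath_to_list hg)
  simp at this
  omega

lemma key {V : Type*} (E : V → V → Prop) (r : V → ℕ) (hr : Function.Injective r) :
    ∀ i k : ℕ, 0 < k → k ≤ 2 ^ i →
      ∀ (u v : V) (f : ℕ → V), MinFP E f k u v →
        (∀ t, 0 < t → t < k → r (f t) < max (r u) (r v)) →
        HDCov E r (2 * i) u v k := by
  intro i
  induction i with
  | zero =>
    intro k hk hk2 u v f hmin htr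
    have hk1 : k = 1 := by simpa using le_antisymm hk2 hk
    subst hk1
    obtain ⟨h0, h1, he⟩ := hmin.1
    have := he 0 (by omega)
    rw [h0, h1] at this
    exact HDCov.edge this
  | succ i IH =>
    intro k hk hk2 u v f hmin htr
    have h2i : (0:ℕ) < 2 ^ i := Nat.pow_pos (by norm_num)
    have hpow : 2 ^ (i + 1) = 2 ^ i + 2 ^ i := by rw [pow_succ]; ring
    have hgoal : 2 * (i + 1) = (2 * i + 1) + 1 := by ring
    rcases le_or_gt k (2 ^ i) with hle | hgt
    · rw [hgoal]
      exact (IH k hk hle u v f hmin htr).mono.mono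
    have hk2' : 2 ≤ k := by omega
    have huv : r u ≠ r v := by
      intro h
      have hu : u = v := hr h
      have : FPath E (fun _ => u) 0 u v := ⟨rfl, hu, by omega⟩
      have := hmin.2 _ _ this
      omega
    rcases lt_or_gt_of_ne huv with hlt | hgt'
    · -- case r u < r v : split at h₀ = ⌈k/2⌉, max over prefix [0, h₀]
      set h₀ := (k + 1) / 2 with hh0
      have hf1 : 1 ≤ h₀ := by omega
      have hf2 : h₀ ≤ k - 1 := by omega
      have hf3 : h₀ ≤ 2 ^ i := by omega
      have hf4 : k - h₀ ≤ 2 ^ i := by omega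
      have hf5 : 1 ≤ k - h₀ := by omega
      obtain ⟨j, hjmem, hjmax⟩ :=
        Finset.exists_max_image (Finset.Icc 0 h₀) (fun t => r (f t)) ⟨0, by simp⟩
      simp only [Finset.mem_Icc, Nat.zero_le, true_and] at hjmem hjmax
      have hjmax' : ∀ t ≤ h₀, r (f t) ≤ r (f j) := fun t ht => hjmax t (by simp [ht])
      have hstrict : ∀ t, t ≤ h₀ → t ≠ j → r (f t) < r (f j) := by
        intro t ht hne
        rcases (hjmax' t ht).lt_or_eq with h | h
        · exact h
        · exact absurd (minfp_inj hmin (by omega) (by omega) (hr h)) hne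
      have hwv : r (f j) < r v := by
        rcases Nat.eq_zero_or_pos j with h | h
        · rw [h, hmin.1.1]; exact hlt
        · have := htr j h (by omega)
          rwa [max_eq_right hlt.le] at this
      have hxv : r (f h₀) < r v := by
        have := htr h₀ (by omega) (by omega)
        rwa [max_eq_right hlt.le] at this
      have hC : MinFP E (fun t => f (h₀ + t)) (k - h₀) (f h₀) (f k) :=
        minfp_seg hmin (by omega) le_rfl
      rw [hmin.1.2.1] at hC
      have hCtr : ∀ t, 0 < t → t < k - h₀ → r (f (h₀ + t)) < max (r (f h₀)) (r v) := by
        intro t ht1 ht2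
        have := htr (h₀ + t) (by omega) (by omega)
        rw [max_eq_right hlt.le] at this
        exact lt_of_lt_of_le this (le_max_right _ _)
      have EC := IH (k - h₀) (by omega) (by omega) (f h₀) v _ hC hCtr
      have S1 : HDCov E r (2 * i + 1) (f j) v (k - j) := by
        rcases eq_or_lt_of_le hjmem with hje | hjl
        · rw [hje]; exact EC.mono
        · have hB : MinFP E (fun t => f (j + t)) (h₀ - j) (f j) (f h₀) :=
            minfp_seg hmin (by omega) (by omega)
          have hBtr : ∀ t, 0 < t → t < h₀ - j → r (f (j + t)) < max (r (f j)) (r (f h₀)) := by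
            intro t ht1 ht2
            exact lt_of_lt_of_le (hstrict (j + t) (by omega) (by omega)) (le_max_left _ _)
          have EB := IH (h₀ - j) (by omega) (by omega) (f j) (f h₀) _ hB hBtr
          have hxw : r (f h₀) < r (f j) := hstrict h₀ le_rfl (by omega)
          have := HDCov.rule4 EB hxw EC hxv
          rwa [show (k - h₀) + (h₀ - j) = k - j by omega] at this
      rw [hgoal]
      rcases Nat.eq_zero_or_pos j with hj0 | hj0
      · rw [hj0, hmin.1.1] at S1
        rw [show k - 0 = k by omega] at S1
        exact S1.mono
      · have hA : MinFP E (fun t => f (0 + t)) (j - 0) (f 0) (f j) :=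
          minfp_seg hmin (by omega) (by omega)
        rw [hmin.1.1] at hA
        have hAtr : ∀ t, 0 < t → t < j - 0 → r (f (0 + t)) < max (r u) (r (f j)) := by
          intro t ht1 ht2
          exact lt_of_lt_of_le (hstrict (0 + t) (by omega) (by omega)) (le_max_right _ _)
        have EA := IH (j - 0) (by omega) (by omega) u (f j) _ hA hAtr
        have hru : r u < r (f j) := by
          have := hstrict 0 (by omega) (by omega)
          rwa [hmin.1.1] at this
        have := HDCov.rule2 S1 hwv EA.mono hru
        rwa [show (j - 0) + (k - j) = k by omega] at this
    · -- case r v < r u : split at g₀ = ⌊k/2⌋, max over suffix [g₀, k]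
      set g₀ := k - (k + 1) / 2 with hg0
      have hf1 : 1 ≤ g₀ := by omega
      have hf2 : g₀ ≤ k - 1 := by omega
      have hf3 : g₀ ≤ 2 ^ i := by omega
      have hf4 : k - g₀ ≤ 2 ^ i := by omega
      obtain ⟨j, hjmem, hjmax⟩ :=
        Finset.exists_max_image (Finset.Icc g₀ k) (fun t => r (f t))
          ⟨k, by simp [Finset.mem_Icc]; omega⟩
      simp only [Finset.mem_Icc] at hjmem
      have hjmax' : ∀ t, g₀ ≤ t → t ≤ k → r (f t) ≤ r (f j) := fun t h1 h2 =>
        hjmax t (by simp [Finset.mem_Icc]; omega)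
      have hstrict : ∀ t, g₀ ≤ t → t ≤ k → t ≠ j → r (f t) < r (f j) := by
        intro t h1 h2 hne
        rcases (hjmax' t h1 h2).lt_or_eq with h | h
        · exact h
        · exact absurd (minfp_inj hmin (by omega) (by omega) (hr h)) hne
      have hwu : r (f j) < r u := by
        rcases eq_or_lt_of_le hjmem.2 with h | h
        · rw [h, hmin.1.2.1]; exact hgt'
        · have := htr j (by omega) h
          rwa [max_eq_left hgt'.le] at this
      have hxu : r (f g₀) < r u := by
        have := htr g₀ (by omega) (by omega)
        rwa [max_eq_left hgt'.le] at this
      have hA : MinFP E (fun t => f (0 + t)) (g₀ - 0) (f 0) (f g₀) :=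
        minfp_seg hmin (by omega) (by omega)
      rw [hmin.1.1] at hA
      have hAtr : ∀ t, 0 < t → t < g₀ - 0 → r (f (0 + t)) < max (r u) (r (f g₀)) := by
        intro t ht1 ht2
        have := htr (0 + t) (by omega) (by omega)
        rw [max_eq_left hgt'.le] at this
        exact lt_of_lt_of_le this (le_max_left _ _)
      have EA := IH (g₀ - 0) (by omega) (by omega) u (f g₀) _ hA hAtr
      have S1 : HDCov E r (2 * i + 1) u (f j) j := by
        rcases eq_or_lt_of_le hjmem.1 with hje | hjl
        · rw [← hje]
          rw [show g₀ - 0 = g₀ by omega] at EA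
          exact EA.mono
        · have hB : MinFP E (fun t => f (g₀ + t)) (j - g₀) (f g₀) (f j) :=
            minfp_seg hmin (by omega) (by omega)
          have hBtr : ∀ t, 0 < t → t < j - g₀ → r (f (g₀ + t)) < max (r (f g₀)) (r (f j)) := by
            intro t ht1 ht2
            exact lt_of_lt_of_le (hstrict (g₀ + t) (by omega) (by omega) (by omega))
              (le_max_right _ _)
          have EB := IH (j - g₀) (by omega) (by omega) (f g₀) (f j) _ hB hBtr
          have hxw : r (f g₀) < r (f j) := hstrict g₀ le_rfl (by omega) (by omega)
          rw [show g₀ - 0 = g₀ by omega] at EA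
          have := HDCov.rule4 EA hxu EB hxw
          rwa [show (j - g₀) + g₀ = j by omega] at this
      rw [hgoal]
      rcases eq_or_lt_of_le hjmem.2 with hjk | hjk
      · rw [hjk, hmin.1.2.1] at S1
        exact S1.mono
      · have hC : MinFP E (fun t => f (j + t)) (k - j) (f j) (f k) :=
          minfp_seg hmin (by omega) le_rfl
        rw [hmin.1.2.1] at hC
        have hCtr : ∀ t, 0 < t → t < k - j → r (f (j + t)) < max (r (f j)) (r v) := by
          intro t ht1 ht2
          exact lt_of_lt_of_le (hstrict (j + t) (by omega) (by omega) (by omega))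
            (le_max_left _ _)
        have EC := IH (k - j) (by omega) (by omega) (f j) v _ hC hCtr
        have hvw : r v < r (f j) := by
          have := hstrict k (by omega) le_rfl (by omega)
          rwa [hmin.1.2.1] at this
        have := HDCov.rule5 S1 hwu EC.mono hvw
        rwa [show (k - j) + j = k by omega] at this

theorem stmt3 {V : Type*} (E : V → V → Prop) (r : V → ℕ) (hr : Function.Injective r) :
    ∀ i k : ℕ, 0 < k → k ≤ 2 ^ i →
      ∀ (u v : V) (p : List V), IsShortestPath E p u v → Trough r p u v →
        p.length - 1 = k → r u < r v → HDCov E r (2 * i) u v k := by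
  intro i k hk hk2 u v p hsp htr hlen _
  have hmin := shortest_to_minfp hsp
  rw [hlen] at hmin
  have hplen : p.length = k + 1 := by
    have : p ≠ [] := by
      rintro rfl
      simp [IsShortestPath, IsPath] at hsp
    have : 0 < p.length := List.length_pos_iff.mpr this
    omega
  have hftr : ∀ t, 0 < t → t < k → r (p.getD t u) < max (r u) (r v) := by
    intro t ht1 ht2
    have htp : t < p.length := by omega
    rw [List.getD_eq_getElem _ _ htp]
    apply htr
    rw [List.mem_iff_getElem]
    refine ⟨t - 1, ?_, ?_⟩
    · simp [hplen]; omega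
    · rw [List.getElem_dropLast, List.getElem_drop]
      congr 1
      omega
  exact key E r hr i k hk hk2 u v _ hmin hftr
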